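/- arXiv:2503.00698 — 5 statements merged into one kernel-verified Lean document; each statement's English description precedes it below -/
import Mathlib

section
/- Fix t ∈ (0,1] and define r₀ = t, r_{k+1} = (1/2) r_k (3 - r_k²), E_k = 1 - r_k. Then there exists an index K such that for all k ≥ K, E_{k+1} ≤ (5/8) E_k; consequently E_k → 0 geometrically, i.e., there exist C > 0 and k₀ such that E_k ≤ C (5/8)^k for all k ≥ k₀. -/
/-- Eventually the error `E_k = 1 - r_k` contracts by a factor `5/8` each step,
hence decays geometrically. -/
theorem stmt_7 (t : ℝ) (ht : t ∈ Set.Ioc (0 : ℝ) 1) (r E : ℕ → ℝ) (hr0 : r 0 = t)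
    (hrec : ∀ k, r (k + 1) = (1 / 2) * r k * (3 - (r k) ^ 2))
    (hE : ∀ k, E k = 1 - r k) :
    (∃ K, ∀ k ≥ K, E (k + 1) ≤ (5 / 8) * E k) ∧
      (∃ C > (0 : ℝ), ∃ k₀, ∀ k ≥ k₀, E k ≤ C * (5 / 8) ^ k) := by
  obtain ⟨ht0, ht1⟩ := ht
  have hinv : ∀ k, 0 < r k ∧ r k ≤ 1 := by
    intro k
    induction k with
    | zero => rw [hr0]; exact ⟨ht0, ht1⟩
    | succ n ih =>
      obtain ⟨h1, h2⟩ := ih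
      rw [hrec]
      constructor
      · nlinarith
      · nlinarith [mul_nonneg (sq_nonneg (1 - r n)) h1.le]
  have hE0 : ∀ k, 0 ≤ E k := fun k => by rw [hE]; linarith [(hinv k).2]
  have hE1 : ∀ k, E k < 1 := fun k => by rw [hE]; linarith [(hinv k).1]
  have hstep : ∀ k, E (k + 1) = E k ^ 2 * (3 - E k) / 2 := by
    intro k
    have h := hE k
    have hrk : r k = 1 - E k := by linarith
    rw [hE (k + 1), hrec, hrk]; ring
  set q := E 0 * (3 - E 0) / 2 with hq
  have hq0 : 0 ≤ q := by nlinarith [hE0 0, hE1 0]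
  have hq1 : q < 1 := by
    have h1 : 0 < 1 - E 0 := by linarith [hE1 0]
    have h2 : 0 < 2 - E 0 := by linarith [hE1 0]
    nlinarith [mul_pos h1 h2]
  have hgeo : ∀ k, E k ≤ E 0 * q ^ k := by
    intro k
    induction k with
    | zero => simp
    | succ n ih =>
      have hk0 := hE0 n
      have hle : E n ≤ E 0 := by
        have hp : q ^ n ≤ 1 := pow_le_one₀ hq0 hq1.le
        nlinarith [hE0 0]
      have hratio : E n * (3 - E n) / 2 ≤ q := by
        have h1 : 0 ≤ E 0 - E n := by linarith
        have h2 : 0 ≤ 3 - E 0 - E n := by linarith [hE1 0]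
        rw [hq]; nlinarith [mul_nonneg h1 h2]
      calc E (n + 1) = E n * (E n * (3 - E n) / 2) := by rw [hstep]; ring
        _ ≤ E n * q := mul_le_mul_of_nonneg_left hratio hk0
        _ ≤ (E 0 * q ^ n) * q := mul_le_mul_of_nonneg_right ih hq0
        _ = E 0 * q ^ (n + 1) := by ring
  -- find K with E k ≤ 5/12 for all k ≥ K
  obtain ⟨K, hK⟩ : ∃ n : ℕ, q ^ n < (5 / 12) / (E 0 + 1) := by
    apply exists_pow_lt_of_lt_one _ hq1
    have := hE0 0
    positivity
  have hsmall : ∀ k ≥ K, E k ≤ 5 / 12 := by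
    intro k hk
    have hpk : q ^ k ≤ q ^ K := pow_le_pow_of_le_one hq0 hq1.le hk
    have hE00 := hE0 0
    have h1 : E 0 * q ^ K ≤ (E 0 + 1) * q ^ K := by
      have := pow_nonneg hq0 K; nlinarith
    have h2 : (E 0 + 1) * q ^ K < 5 / 12 := by
      have hpos : (0:ℝ) < E 0 + 1 := by linarith
      calc (E 0 + 1) * q ^ K < (E 0 + 1) * ((5 / 12) / (E 0 + 1)) := by
            exact mul_lt_mul_of_pos_left hK hpos
        _ = 5 / 12 := by field_simp
    have h3 : E 0 * q ^ k ≤ E 0 * q ^ K := mul_le_mul_of_nonneg_left hpk hE00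
    linarith [hgeo k]
  have hcontract : ∀ k ≥ K, E (k + 1) ≤ (5 / 8) * E k := by
    intro k hk
    have h1 := hE0 k
    have h2 := hsmall k hk
    rw [hstep]
    nlinarith [mul_nonneg h1 (by linarith : (0:ℝ) ≤ 5 / 12 - E k),
      pow_nonneg h1 3]
  refine ⟨⟨K, hcontract⟩, (E K + 1) / (5 / 8) ^ K, by have := hE0 K; positivity, K, ?_⟩
  have haux : ∀ n : ℕ, E (K + n) ≤ E K * (5 / 8) ^ n := by
    intro n
    induction n with
    | zero => simp
    | succ m ih =>
      calc E (K + (m + 1)) = E ((K + m) + 1) := by ring_nf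
        _ ≤ (5 / 8) * E (K + m) := hcontract _ (Nat.le_add_right K m)
        _ ≤ (5 / 8) * (E K * (5 / 8) ^ m) := by linarith
        _ = E K * (5 / 8) ^ (m + 1) := by ring
  intro k hk
  obtain ⟨n, rfl⟩ := Nat.exists_eq_add_of_le hk
  have h := haux n
  have hpow : ((5:ℝ) / 8) ^ (K + n) = (5 / 8) ^ K * (5 / 8) ^ n := pow_add _ _ _
  have hEK := hE0 K
  have hpK : (0:ℝ) < (5 / 8) ^ K := by positivity
  have hpn : (0:ℝ) ≤ ((5:ℝ) / 8) ^ n := by positivity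
  rw [hpow, div_mul_eq_mul_div, ← sub_nonneg]
  have : (E K + 1) * ((5 / 8) ^ K * (5 / 8) ^ n) / (5 / 8) ^ K
      = (E K + 1) * (5 / 8) ^ n := by field_simp
  rw [this]
  nlinarith
end

section
/- For x ∈ [-1,1] with x ≠ 0, define f₀ = 1 and f_{k+1} = (1/2) f_k (3 - x² f_k²). Then f_k → 1/|x| as k → ∞, and x² f_k → |x|. -/
/-- The Newton iteration `f_{k+1} = (1/2) f_k (3 - x² f_k²)`, `f₀ = 1`, converges to
`1/|x|`, and `x² f_k → |x|`, for `x ∈ [-1,1]`, `x ≠ 0`. -/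
theorem stmt_8 (x : ℝ) (hx : x ∈ Set.Icc (-1 : ℝ) 1) (hx0 : x ≠ 0) (f : ℕ → ℝ)
    (hf0 : f 0 = 1)
    (hrec : ∀ k, f (k + 1) = (1 / 2) * f k * (3 - x ^ 2 * (f k) ^ 2)) :
    Filter.Tendsto f Filter.atTop (nhds (1 / |x|)) ∧
      Filter.Tendsto (fun k => x ^ 2 * f k) Filter.atTop (nhds |x|) := by
  set a := |x| with ha_def
  have ha : 0 < a := abs_pos.mpr hx0
  have ha1 : a ≤ 1 := abs_le.mpr ⟨hx.1, hx.2⟩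
  have hxa : x ^ 2 = a ^ 2 := (sq_abs x).symm
  set g : ℕ → ℝ := fun k => a * f k with hg_def
  have hg0 : g 0 = a := by simp [hg_def, hf0]
  have hgrec : ∀ k, g (k + 1) = (1 / 2) * g k * (3 - (g k) ^ 2) := by
    intro k
    simp only [hg_def, hrec k, hxa]
    ring
  -- invariant: a ≤ g k ≤ 1
  have hbound : ∀ k, a ≤ g k ∧ g k ≤ 1 := by
    intro k
    induction k with
    | zero => exact ⟨le_of_eq hg0.symm, hg0 ▸ ha1⟩
    | succ n ih =>
      obtain ⟨h1, h2⟩ := ih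
      have hpos : 0 < g n := lt_of_lt_of_le ha h1
      constructor
      · rw [hgrec]; nlinarith [mul_nonneg (sq_nonneg (1 - g n)) (by linarith : (0:ℝ) ≤ g n + 2)]
      · rw [hgrec]; nlinarith [mul_nonneg (sq_nonneg (1 - g n)) (by linarith : (0:ℝ) ≤ g n + 2)]
  have hmono : Monotone g := by
    apply monotone_nat_of_le_succ
    intro n
    obtain ⟨h1, h2⟩ := hbound n
    have hpos : 0 < g n := lt_of_lt_of_le ha h1
    rw [hgrec]; nlinarith
  have hbdd : BddAbove (Set.range g) := ⟨1, by rintro _ ⟨k, rfl⟩; exact (hbound k).2⟩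
  set L := ⨆ k, g k with hL_def
  have htend : Filter.Tendsto g Filter.atTop (nhds L) :=
    tendsto_atTop_ciSup hmono hbdd
  have hLa : a ≤ L := hg0 ▸ le_ciSup hbdd 0
  have hLpos : 0 < L := lt_of_lt_of_le ha hLa
  -- limit equation
  have htend' : Filter.Tendsto (fun k => g (k + 1)) Filter.atTop (nhds L) :=
    htend.comp (Filter.tendsto_add_atTop_nat 1)
  have htend'' : Filter.Tendsto (fun k => (1 / 2) * g k * (3 - (g k) ^ 2))
      Filter.atTop (nhds ((1 / 2) * L * (3 - L ^ 2))) := by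
    have := htend
    exact ((this.const_mul (1/2)).mul (tendsto_const_nhds.sub (this.pow 2)))
  have heq : L = (1 / 2) * L * (3 - L ^ 2) := by
    apply tendsto_nhds_unique htend'
    simpa only [← hgrec] using htend''
  have hL1 : L = 1 := by nlinarith
  have hf : Filter.Tendsto f Filter.atTop (nhds (1 / a)) := by
    have : Filter.Tendsto (fun k => a⁻¹ * g k) Filter.atTop (nhds (a⁻¹ * L)) :=
      htend.const_mul _
    rw [hL1] at this
    have hfeq : (fun k => a⁻¹ * g k) = f := by
      funext k; simp [hg_def]; field_simp
    rw [hfeq] at this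
    simpa [one_div] using this
  refine ⟨hf, ?_⟩
  have : Filter.Tendsto (fun k => a * g k) Filter.atTop (nhds (a * L)) :=
    htend.const_mul _
  rw [hL1, mul_one] at this
  have heq2 : (fun k => x ^ 2 * f k) = fun k => a * g k := by
    funext k; simp [hg_def, hxa]; ring
  rw [heq2]
  exact this
end

section
/- For x ∈ [-1,1] with x ≠ 0, the sequence g_k(x) = x² f_k(x), where f₀ = 1 and f_{k+1} = (1/2) f_k (3 - x² f_k²), satisfies | |x| - g_k(x) | = |x| · E_k where E_k = 1 - |x| f_k ∈ [0,1), and hence |g_k(x) - |x|| ≤ E_k. Moreover g_k(0) = 0 = |0|, so g_k converges to |x| pointwise on all of [-1,1]. -/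
/-- The approximants `g_k(x) = x² f_k(x)` to `|x|` satisfy
`||x| - g_k(x)| = |x| E_k` with `E_k = 1 - |x| f_k ∈ [0,1)` for `x ≠ 0`, hence
`|g_k(x) - |x|| ≤ E_k`; moreover `g_k(0) = 0` and `g_k → |x|` pointwise on `[-1,1]`. -/
theorem stmt_9 (f : ℝ → ℕ → ℝ) (E : ℝ → ℕ → ℝ)
    (hf0 : ∀ x, f x 0 = 1)
    (hrec : ∀ x k, f x (k + 1) = (1 / 2) * f x k * (3 - x ^ 2 * (f x k) ^ 2))
    (hE : ∀ x k, E x k = 1 - |x| * f x k) :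
    (∀ x ∈ Set.Icc (-1 : ℝ) 1, x ≠ 0 → ∀ k,
        |(|x|) - x ^ 2 * f x k| = |x| * E x k ∧
        E x k ∈ Set.Ico (0 : ℝ) 1 ∧
        |x ^ 2 * f x k - (|x|)| ≤ E x k) ∧
    (∀ k, (0 : ℝ) ^ 2 * f 0 k = |(0 : ℝ)|) ∧
    (∀ x ∈ Set.Icc (-1 : ℝ) 1,
        Filter.Tendsto (fun k => x ^ 2 * f x k) Filter.atTop (nhds |x|)) := by
  -- key recurrence for E
  have key : ∀ x k, E x (k + 1) = (E x k) ^ 2 * (3 - E x k) / 2 := by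
    intro x k
    have hx2 : x ^ 2 = |x| ^ 2 := (sq_abs x).symm
    rw [hE, hrec, hE, hx2]; ring
  -- g in terms of E
  have hg : ∀ x k, x ^ 2 * f x k = |x| * (1 - E x k) := by
    intro x k
    have hx2 : x ^ 2 = |x| ^ 2 := (sq_abs x).symm
    rw [hE, hx2]; ring
  -- bounds on E for x ≠ 0
  have hbd : ∀ x : ℝ, x ∈ Set.Icc (-1 : ℝ) 1 → x ≠ 0 →
      ∀ k, 0 ≤ E x k ∧ E x k ≤ E x 0 ∧ E x k < 1 := by
    intro x hx hx0
    have h0 : 0 < |x| := abs_pos.mpr hx0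
    have h1 : |x| ≤ 1 := abs_le.mpr ⟨hx.1, hx.2⟩
    have hE0 : E x 0 = 1 - |x| := by rw [hE, hf0]; ring
    intro k
    induction k with
    | zero => refine ⟨by nlinarith [hE0], le_refl _, by nlinarith [hE0]⟩
    | succ n ih =>
      obtain ⟨h1n, h2n, h3n⟩ := ih
      have hE0lt : E x 0 < 1 := by nlinarith [hE0]
      rw [key]
      refine ⟨by nlinarith, ?_, by
        nlinarith [mul_pos (show (0:ℝ) < 1 - E x n by linarith)
          (show (0:ℝ) < 2 + 2 * E x n - (E x n)^2 by nlinarith)]⟩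
      calc (E x n) ^ 2 * (3 - E x n) / 2 ≤ E x n := by
            nlinarith [mul_nonneg h1n (show (0:ℝ) ≤ (1 - E x n) * (2 - E x n) by nlinarith)]
        _ ≤ E x 0 := h2n
  constructor
  · intro x hx hx0 k
    obtain ⟨h1k, h2k, h3k⟩ := hbd x hx hx0 k
    have h0 : 0 ≤ |x| := abs_nonneg x
    have h1 : |x| ≤ 1 := abs_le.mpr ⟨hx.1, hx.2⟩
    have hgk := hg x k
    refine ⟨?_, ⟨h1k, h3k⟩, ?_⟩
    · rw [hgk]
      rw [show |x| - |x| * (1 - E x k) = |x| * E x k by ring]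
      exact abs_of_nonneg (by positivity)
    · rw [hgk]
      rw [show |x| * (1 - E x k) - |x| = -(|x| * E x k) by ring, abs_neg]
      rw [abs_of_nonneg (by positivity)]
      nlinarith
  constructor
  · intro k; simp
  · intro x hx
    rcases eq_or_ne x 0 with rfl | hx0
    · set_option linter.unnecessarySimpa false in simpa using tendsto_const_nhds (α := ℝ) (x := (0:ℝ)) (f := Filter.atTop (α := ℕ))
    · have h0 : 0 < |x| := abs_pos.mpr hx0
      have h1 : |x| ≤ 1 := abs_le.mpr ⟨hx.1, hx.2⟩
      have hE0 : E x 0 = 1 - |x| := by rw [hE, hf0]; ring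
      set q : ℝ := E x 0 * (3 - E x 0) / 2 with hq
      have hq0 : 0 ≤ q := by nlinarith [hE0]
      have hq1 : q < 1 := by nlinarith [hE0]
      -- E x k ≤ E x 0 * q ^ k
      have hdecay : ∀ k, E x k ≤ E x 0 * q ^ k := by
        intro k
        induction k with
        | zero => simp
        | succ n ih =>
          obtain ⟨h1n, h2n, h3n⟩ := hbd x hx hx0 n
          have step : E x (n + 1) ≤ q * E x n := by
            rw [key, hq]
            nlinarith [mul_nonneg h1n
              (show (0:ℝ) ≤ (E x 0 - E x n) * (3 - E x n - E x 0) by nlinarith)]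
          calc E x (n + 1) ≤ q * E x n := step
            _ ≤ q * (E x 0 * q ^ n) := by
                exact mul_le_mul_of_nonneg_left ih hq0
            _ = E x 0 * q ^ (n + 1) := by ring
      have hEto0 : Filter.Tendsto (fun k => E x k) Filter.atTop (nhds 0) := by
        have hup : Filter.Tendsto (fun k => E x 0 * q ^ k) Filter.atTop (nhds 0) := by
          have := tendsto_pow_atTop_nhds_zero_of_lt_one hq0 hq1
          simpa using this.const_mul (E x 0)
        refine squeeze_zero (fun k => (hbd x hx hx0 k).1) hdecay hup
      have : Filter.Tendsto (fun k => |x| * (1 - E x k)) Filter.atTop (nhds (|x| * (1 - 0))) := by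
        exact (tendsto_const_nhds.sub hEto0).const_mul |x|
      simp only [sub_zero, mul_one] at this
      exact this.congr (fun k => (hg x k).symm)
end

section
/- For each k ≥ 0, the function f_k defined by f₀(x) = 1 and f_{k+1}(x) = (1/2) f_k(x) (3 - x² f_k(x)²) is a polynomial in x of degree exactly 3^k - 1 for k ≥ 1 (and degree 0 for k = 0), and f_k is an even polynomial. -/
open Polynomial

/-- The Newton iterates `f₀ = 1`, `f_{k+1} = (1/2) f_k (3 - X² f_k²)` are even
polynomials of degree `3^k - 1`. -/
theorem stmt_11 (f : ℕ → Polynomial ℝ) (hf0 : f 0 = 1)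
    (hrec : ∀ k, f (k + 1) = Polynomial.C (1 / 2) * f k *
      (3 - Polynomial.X ^ 2 * (f k) ^ 2)) :
    (f 0).natDegree = 0 ∧
    (∀ k, 1 ≤ k → (f k).natDegree = 3 ^ k - 1) ∧
    (∀ k, (f k).comp (-Polynomial.X) = f k) := by
  have key : ∀ k, f k ≠ 0 ∧ (f k).natDegree = 3 ^ k - 1 := by
    intro k
    induction k with
    | zero => simp [hf0]
    | succ k ih =>
      obtain ⟨hne, hdeg⟩ := ih
      have h3k : 1 ≤ 3 ^ k := Nat.one_le_pow _ _ (by norm_num)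
      have hXf : (Polynomial.X ^ 2 * (f k) ^ 2 : Polynomial ℝ).natDegree
          = 2 * (3 ^ k - 1) + 2 := by
        rw [natDegree_mul (pow_ne_zero _ Polynomial.X_ne_zero) (pow_ne_zero _ hne),
          natDegree_pow, natDegree_pow, natDegree_X, hdeg]
        ring
      have hlt : ((3 : Polynomial ℝ)).natDegree
          < (Polynomial.X ^ 2 * (f k) ^ 2 : Polynomial ℝ).natDegree := by
        rw [hXf]
        simp [Polynomial.natDegree_ofNat]
      have hsub : ((3 : Polynomial ℝ) - Polynomial.X ^ 2 * (f k) ^ 2).natDegree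
          = 2 * (3 ^ k - 1) + 2 :=
        (natDegree_sub_eq_right_of_natDegree_lt hlt).trans hXf
      have hsne : (3 : Polynomial ℝ) - Polynomial.X ^ 2 * (f k) ^ 2 ≠ 0 := by
        intro h
        rw [h] at hsub
        simp at hsub
      constructor
      · rw [hrec k]
        exact mul_ne_zero (mul_ne_zero (by norm_num) hne) hsne
      · rw [hrec k, natDegree_mul (mul_ne_zero (by norm_num) hne) hsne,
          natDegree_mul (by norm_num : (Polynomial.C (1/2 : ℝ)) ≠ 0) hne,
          natDegree_C, hdeg, hsub]
        omega
  refine ⟨by simp [hf0], fun k _ => (key k).2, fun k => ?_⟩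
  induction k with
  | zero => simp [hf0]
  | succ k ih =>
    rw [hrec k]
    simp only [mul_comp, sub_comp, pow_comp, X_comp, C_comp, ih, neg_sq,
      ofNat_comp]
    ring_nf
end

section
/- A deep polynomial g = p₁ ∘ p₂ ∘ ... ∘ p_L with layer degrees d₁, ..., d_L ≥ 1, after normalizing each inner layer p₂, ..., p_L to be monic with zero constant term, is determined by N = d₁ + d₂ + ... + d_L - L + 2 free coefficients. In particular, if N < d₁d₂⋯d_L + 1, the set of such composites is a proper subset of the polynomials of degree D = d₁d₂⋯d_L. -/
open Polynomial

private lemma foldr_natDegree' (l : List (Polynomial ℝ)) :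
    (l.foldr Polynomial.comp Polynomial.X).natDegree = (l.map natDegree).prod := by
  induction l with
  | nil => simp
  | cons q l ih => simp [natDegree_comp, ih]

private lemma foldr_comp_eq' (l : List (Polynomial ℝ)) (q : Polynomial ℝ) :
    l.foldr Polynomial.comp q = (l.foldr Polynomial.comp Polynomial.X).comp q := by
  induction l with
  | nil => simp
  | cons r l ih => simp [ih, comp_assoc]

private lemma foldr_monic' (l : List (Polynomial ℝ)) (h : ∀ r ∈ l, r.Monic ∧ r.coeff 0 = 0) :
    (l.foldr Polynomial.comp Polynomial.X).Monic ∧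
    (l.foldr Polynomial.comp Polynomial.X).coeff 0 = 0 ∧
    (l.foldr Polynomial.comp Polynomial.X).natDegree ≠ 0 := by
  induction l with
  | nil => simp [monic_X]
  | cons r l ih =>
    obtain ⟨hm, hc0, hnd⟩ := ih (fun s hs => h s (List.mem_cons_of_mem _ hs))
    obtain ⟨hrm, hrc⟩ := h r List.mem_cons_self
    have hrd : r.natDegree ≠ 0 := by
      intro h0
      rw [hrm.natDegree_eq_zero] at h0
      simp [h0] at hrc
    simp only [List.foldr_cons]
    refine ⟨hrm.comp hm hnd, ?_, ?_⟩
    · rw [coeff_zero_eq_eval_zero, eval_comp, ← coeff_zero_eq_eval_zero, hc0,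
        ← coeff_zero_eq_eval_zero, hrc]
    · rw [natDegree_comp]
      exact mul_ne_zero hrd hnd

/-- The key indecomposability fact: `X^(a*b) + X` is not `A ∘ B` with
`deg A = a ≥ 2`, `deg B = b ≥ 2`, `B` monic with zero constant term. -/
private lemma key' (a b : ℕ) (ha : 2 ≤ a) (hb : 2 ≤ b) (A B : Polynomial ℝ)
    (hA : A.natDegree = a) (hB : B.natDegree = b) (hBm : B.Monic) (hB0 : B.coeff 0 = 0)
    (hg : (X : Polynomial ℝ) ^ (a * b) + X = A.comp B) : False := by
  set D := a * b with hD
  have hD4 : 4 ≤ D := le_trans (by norm_num) (Nat.mul_le_mul ha hb)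
  have hdegX : (degree (X : Polynomial ℝ)) < (D : ℕ) := by
    rw [degree_X]
    exact_mod_cast by omega
  have hgm : ((X : Polynomial ℝ) ^ D + X).Monic := monic_X_pow_add hdegX
  have hgdeg : ((X : Polynomial ℝ) ^ D + X).degree = (D : WithBot ℕ) := by
    rw [degree_add_eq_left_of_degree_lt (by rwa [degree_X_pow]), degree_X_pow]
  -- A is monic
  have hBnd : B.natDegree ≠ 0 := by omega
  have hAm : A.Monic := by
    have := leadingCoeff_comp (p := A) (q := B) hBnd
    rw [← hg, hgm.leadingCoeff, hBm.leadingCoeff, one_pow, mul_one] at this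
    exact this.symm
  have hAne : A ≠ 0 := hAm.ne_zero
  -- R = A - X^a has small degree
  have hRdeg : (A - X ^ a).degree < (a : WithBot ℕ) := by
    have h1 : A.degree = (a : WithBot ℕ) := by rw [degree_eq_natDegree hAne, hA]
    have := degree_sub_lt (q := (X : Polynomial ℝ) ^ a) (by rw [h1, degree_X_pow]) hAne
      (by rw [hAm.leadingCoeff, (monic_X_pow a).leadingCoeff])
    rwa [h1] at this
  have hRle : (A - X ^ a).natDegree ≤ a - 1 := by
    by_cases h0 : A - X ^ a = 0
    · simp [h0]
    · have := (natDegree_lt_iff_degree_lt h0).mpr hRdeg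
      omega
  -- E = B^a - X^D has degree ≤ (a-1)*b
  have hcompR : (A - X ^ a).comp B = A.comp B - B ^ a := by
    rw [sub_comp, X_pow_comp]
  have hE : B ^ a - X ^ D = -((A - X ^ a).comp B) + X := by
    rw [hcompR, ← hg]; ring
  have hEdeg : (B ^ a - X ^ D).natDegree ≤ (a - 1) * b := by
    rw [hE]
    refine le_trans (natDegree_add_le _ _) ?_
    have h1 : (-((A - X ^ a).comp B)).natDegree ≤ (a - 1) * b := by
      rw [natDegree_neg, natDegree_comp, hB]
      exact Nat.mul_le_mul_right _ hRle
    have h2 : (X : Polynomial ℝ).natDegree ≤ (a - 1) * b := by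
      rw [natDegree_X]
      calc 1 ≤ b := by omega
      _ ≤ (a - 1) * b := Nat.le_mul_of_pos_left _ (by omega)
    omega
  -- the geometric sum S
  set S : Polynomial ℝ := ∑ i ∈ Finset.range a, B ^ i * (X ^ b) ^ (a - 1 - i) with hS
  have hgeom : S * (B - X ^ b) = B ^ a - X ^ D := by
    rw [hS, geom_sum₂_mul, ← pow_mul, mul_comm b a]
  have hterm : ∀ i ∈ Finset.range a,
      (B ^ i * (X ^ b) ^ (a - 1 - i)).Monic ∧
      (B ^ i * (X ^ b) ^ (a - 1 - i)).natDegree = (a - 1) * b := by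
    intro i hi
    have hi' : i < a := Finset.mem_range.mp hi
    have hm : (B ^ i * (X ^ b) ^ (a - 1 - i)).Monic :=
      (hBm.pow i).mul ((monic_X_pow b).pow _)
    refine ⟨hm, ?_⟩
    rw [(hBm.pow i).natDegree_mul ((monic_X_pow b).pow _), natDegree_pow, hB,
      natDegree_pow, natDegree_X_pow]
    have : i ≤ a - 1 := by omega
    nlinarith [Nat.sub_add_cancel this]
  have hScoeff : S.coeff ((a - 1) * b) = (a : ℝ) := by
    rw [hS, finset_sum_coeff]
    have : ∀ i ∈ Finset.range a, (B ^ i * (X ^ b) ^ (a - 1 - i)).coeff ((a - 1) * b) = 1 := by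
      intro i hi
      obtain ⟨hm, hdeg⟩ := hterm i hi
      rw [← hdeg, ← Polynomial.leadingCoeff, hm.leadingCoeff]
    rw [Finset.sum_congr rfl this, Finset.sum_const, Finset.card_range, nsmul_eq_mul, mul_one]
  have hSne : S ≠ 0 := by
    intro h0
    rw [h0, coeff_zero] at hScoeff
    have : (a : ℝ) ≠ 0 := by positivity
    exact this hScoeff.symm
  have hSdeg : S.natDegree = (a - 1) * b := by
    refine le_antisymm ?_ ?_
    · exact natDegree_sum_le_of_forall_le _ _ (fun i hi => (hterm i hi).2.le)
    · refine le_natDegree_of_ne_zero ?_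
      rw [hScoeff]
      positivity
  -- conclude B = X^b
  have hBXb : B = X ^ b := by
    by_contra hne
    have hcne : B - X ^ b ≠ 0 := sub_ne_zero.mpr hne
    have hmul : (S * (B - X ^ b)).natDegree = (a - 1) * b + (B - X ^ b).natDegree := by
      rw [natDegree_mul hSne hcne, hSdeg]
    rw [hgeom] at hmul
    have hc0 : (B - X ^ b).natDegree = 0 := by omega
    have := eq_C_of_natDegree_eq_zero hc0
    have hcoeff : (B - X ^ b).coeff 0 = 0 := by
      rw [coeff_sub, hB0, coeff_X_pow, if_neg (by omega : ¬ (0:ℕ) = b)]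
      ring
    rw [hcoeff, map_zero] at this
    exact hcne this
  -- final contradiction via coefficient 1
  have h1 : ((X : Polynomial ℝ) ^ D + X).coeff 1 = 1 := by
    rw [coeff_add, coeff_X_pow, coeff_X_one, if_neg (by omega)]
    norm_num
  rw [hg, hBXb, ← expand_eq_comp_X_pow, coeff_expand (by omega : 0 < b)] at h1
  rw [if_neg (by intro h; exact absurd (Nat.le_of_dvd one_pos h) (by omega))] at h1
  norm_num at h1

/-- With normalized inner layers, the set of deep polynomials with layer degrees
`d₁, …, d_L` (having `N = Σ dᵢ - L + 2` free coefficients) is a proper subset of the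
polynomials of degree `D = Π dᵢ` whenever `N < D + 1`. -/
theorem stmt_15 (L : ℕ) (hL : 1 ≤ L) (d : Fin L → ℕ) (hd : ∀ i, 1 ≤ d i)
    (hN : (∑ i, d i) - L + 2 < (∏ i, d i) + 1) :
    {g : Polynomial ℝ | ∃ p : Fin L → Polynomial ℝ,
        (∀ i, (p i).natDegree = d i) ∧
        (∀ i : Fin L, 1 ≤ (i : ℕ) → (p i).Monic ∧ (p i).coeff 0 = 0) ∧
        g = (List.ofFn p).foldr Polynomial.comp Polynomial.X}
      ⊂ {g : Polynomial ℝ | g.natDegree = ∏ i, d i} := by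
  -- two indices with degree ≥ 2
  obtain ⟨i, j, hij, hdi, hdj⟩ :
      ∃ i j : Fin L, (i : ℕ) < (j : ℕ) ∧ 2 ≤ d i ∧ 2 ≤ d j := by
    set s := Finset.univ.filter (fun i => 2 ≤ d i) with hs
    have hprod : ∏ i ∈ s, d i = ∏ i, d i :=
      Finset.prod_subset (Finset.subset_univ s)
        (fun x _ hx => by
          simp only [hs, Finset.mem_filter, Finset.mem_univ, true_and, not_le] at hx
          have := hd x; omega)
    have hsum : (∑ i ∈ s, d i) + (L - s.card) = ∑ i, d i := by
      have h1 : (∑ i ∈ s, d i) + ∑ i ∈ Finset.univ.filter (fun i => ¬ 2 ≤ d i), d i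
          = ∑ i, d i := Finset.sum_filter_add_sum_filter_not _ _ _
      have h2 : ∑ i ∈ Finset.univ.filter (fun i => ¬ 2 ≤ d i), d i
          = (Finset.univ.filter (fun i => ¬ 2 ≤ d i)).card := by
        rw [Finset.card_eq_sum_ones]
        refine Finset.sum_congr rfl (fun x hx => ?_)
        simp only [Finset.mem_filter, Finset.mem_univ, true_and, not_le] at hx
        have := hd x; omega
      have h3 : s.card + (Finset.univ.filter (fun i => ¬ 2 ≤ d i)).card = L := by
        rw [hs, Finset.card_filter_add_card_filter_not]
        simp
      omega
    have hLsum : L ≤ ∑ i, d i := by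
      calc L = ∑ _i : Fin L, 1 := by simp
      _ ≤ ∑ i, d i := Finset.sum_le_sum (fun i _ => hd i)
    have hcard : 1 < s.card := by
      by_contra hc
      push_neg at hc
      interval_cases h : s.card
      · have hse : s = ∅ := Finset.card_eq_zero.mp h
        rw [hse] at hprod hsum
        simp at hprod hsum
        omega
      · obtain ⟨i₀, hi₀⟩ := Finset.card_eq_one.mp h
        have hmem : i₀ ∈ s := by rw [hi₀]; exact Finset.mem_singleton_self _
        have hdi₀ : 2 ≤ d i₀ := by
          simpa [hs] using hmem
        rw [hi₀] at hprod hsum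
        simp only [Finset.prod_singleton, Finset.sum_singleton] at hprod hsum
        omega
    obtain ⟨x, hx, y, hy, hxy⟩ := Finset.one_lt_card.mp hcard
    have hdx : 2 ≤ d x := by simpa [hs] using hx
    have hdy : 2 ≤ d y := by simpa [hs] using hy
    rcases lt_or_gt_of_ne hxy with h | h
    · exact ⟨x, y, h, hdx, hdy⟩
    · exact ⟨y, x, h, hdy, hdx⟩
  set D := ∏ i, d i with hDdef
  have hDpos : 0 < D := Finset.prod_pos (fun i _ => hd i)
  have hD2 : 2 ≤ D := le_trans hdi (Nat.le_of_dvd hDpos (Finset.dvd_prod_of_mem d (Finset.mem_univ i)))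
  -- the degree of any composite is D
  have hsub : {g : Polynomial ℝ | ∃ p : Fin L → Polynomial ℝ,
        (∀ i, (p i).natDegree = d i) ∧
        (∀ i : Fin L, 1 ≤ (i : ℕ) → (p i).Monic ∧ (p i).coeff 0 = 0) ∧
        g = (List.ofFn p).foldr Polynomial.comp Polynomial.X}
      ⊆ {g : Polynomial ℝ | g.natDegree = ∏ i, d i} := by
    rintro g ⟨p, hdeg, _, rfl⟩
    show _ = _
    rw [foldr_natDegree', List.map_ofFn]
    have : (natDegree ∘ p) = d := funext hdeg
    rw [this, List.prod_ofFn]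
  rw [Set.ssubset_iff_of_subset hsub]
  -- the witness X^D + X
  refine ⟨X ^ D + X, ?_, ?_⟩
  · show (_ : Polynomial ℝ).natDegree = _
    have hdegX : (degree (X : Polynomial ℝ)) < ((D : ℕ) : WithBot ℕ) := by
      rw [degree_X]
      exact_mod_cast by omega
    have hgdeg : ((X : Polynomial ℝ) ^ D + X).degree = (D : WithBot ℕ) := by
      rw [degree_add_eq_left_of_degree_lt (by rwa [degree_X_pow]), degree_X_pow]
    exact natDegree_eq_of_degree_eq_some hgdeg
  · rintro ⟨p, hdeg, hnorm, hg⟩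
    set l := List.ofFn p with hl
    set k := (j : ℕ) with hk
    have hk1 : 1 ≤ k := by omega
    have hkL : k < L := j.isLt
    set B := (l.drop k).foldr Polynomial.comp Polynomial.X with hBdef
    set A := (l.take k).foldr Polynomial.comp Polynomial.X with hAdef
    have hsplit : (X : Polynomial ℝ) ^ D + X = A.comp B := by
      rw [hg, ← List.take_append_drop k l, List.foldr_append, foldr_comp_eq']
    have hlen : l.length = L := by rw [hl, List.length_ofFn]
    -- degrees
    have hmap : l.map natDegree = List.ofFn d := by
      rw [hl, List.map_ofFn]
      exact congrArg _ (funext hdeg)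
    have hAdeg : A.natDegree = ((List.ofFn d).take k).prod := by
      rw [hAdef, foldr_natDegree', List.map_take, hmap]
    have hBdeg : B.natDegree = ((List.ofFn d).drop k).prod := by
      rw [hBdef, foldr_natDegree', List.map_drop, hmap]
    have hab : A.natDegree * B.natDegree = D := by
      rw [hAdeg, hBdeg, List.prod_take_mul_prod_drop, List.prod_ofFn]
    -- d i divides a, d j divides b
    have hlend : (List.ofFn d).length = L := List.length_ofFn
    have hiLt : (i : ℕ) < ((List.ofFn d).take k).length := by
      rw [List.length_take, hlend]
      omega
    have hdia : d i ∣ A.natDegree := by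
      rw [hAdeg]
      have hmem : d i ∈ (List.ofFn d).take k := by
        have : ((List.ofFn d).take k)[(i : ℕ)] = d i := by
          rw [List.getElem_take, List.getElem_ofFn]
        rw [← this]
        exact List.getElem_mem _
      exact List.dvd_prod hmem
    have hjLt : 0 < ((List.ofFn d).drop k).length := by
      rw [List.length_drop, hlend]
      omega
    have hdjb : d j ∣ B.natDegree := by
      rw [hBdeg]
      have hmem : d j ∈ (List.ofFn d).drop k := by
        have : ((List.ofFn d).drop k)[0] = d j := by
          rw [List.getElem_drop, List.getElem_ofFn]
          congr 1
        rw [← this]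
        exact List.getElem_mem _
      exact List.dvd_prod hmem
    have hapos : 0 < A.natDegree := by
      rcases Nat.eq_zero_or_pos A.natDegree with h | h
      · rw [h, zero_mul] at hab; omega
      · exact h
    have hbpos : 0 < B.natDegree := by
      rcases Nat.eq_zero_or_pos B.natDegree with h | h
      · rw [h, mul_zero] at hab; omega
      · exact h
    have ha2 : 2 ≤ A.natDegree := le_trans hdi (Nat.le_of_dvd hapos hdia)
    have hb2 : 2 ≤ B.natDegree := le_trans hdj (Nat.le_of_dvd hbpos hdjb)
    -- B is monic with zero constant term
    have hBm : B.Monic ∧ B.coeff 0 = 0 := by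
      have := foldr_monic' (l.drop k) ?_
      · exact ⟨this.1, this.2.1⟩
      · intro r hr
        obtain ⟨n, hn, hrn⟩ := List.mem_iff_getElem.mp hr
        have hnl : k + n < L := by
          rw [List.length_drop, hlen] at hn
          omega
        have : r = p ⟨k + n, hnl⟩ := by
          rw [← hrn, List.getElem_drop]
          simp only [hl, List.getElem_ofFn]
        rw [this]
        exact hnorm _ (by simp; omega)
    exact key' A.natDegree B.natDegree ha2 hb2 A B rfl rfl hBm.1 hBm.2
      (by rw [hab]; exact hsplit)
end
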